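/- arXiv:1110.5723 — 2 statements merged into one kernel-verified Lean document; each statement's English description precedes it below -/
import Mathlib

section
/- Fix an integer q ≥ 2, let (λ_i)_{i≥1} be positive reals with λ_i ≥ α > 0 for all i, let N^(n) → ∞, and let f^(n) : [N^(n)]^q → ℝ be symmetric vanishing on diagonals. If B_p(N^(n), f^(n)) → 0 as n → ∞ for every p = 1,…,q−1, then: (a) T(N^(n), f^(n), λ) = Σ_{(i₁,…,i_q) ∈ [N^(n)]^q} f^(n)(i₁,…,i_q)⁴ · Π_{l=1}^{q} λ_{i_l}^{−1} → 0; and (b) for every r = 1,…,q and every l = 1,…,min(r, q−1), W_{r,l}(N^(n), f^(n), λ) → 0. -/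
open MeasureTheory ProbabilityTheory Filter Finset Topology
open scoped ENNReal NNReal

noncomputable section

/-- The homogeneous sum of order `q` based on the kernel `f` and the first `N`
elements (indexed by `0, …, N-1`) of the sequence `X`. -/
def homSum {Ω : Type*} (q N : ℕ) (f : (Fin q → ℕ) → ℝ) (X : ℕ → Ω → ℝ) (ω : Ω) : ℝ :=
  ∑ i : Fin q → Fin N, f (fun k => (i k : ℕ)) * ∏ k, X (i k : ℕ) ω

/-- The kernel `f` is symmetric. -/
def SymmKernel (q : ℕ) (f : (Fin q → ℕ) → ℝ) : Prop :=
  ∀ (σ : Equiv.Perm (Fin q)) (i : Fin q → ℕ), f (i ∘ σ) = f i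

/-- The kernel `f` vanishes on diagonals. -/
def VanishOnDiag (q : ℕ) (f : (Fin q → ℕ) → ℝ) : Prop :=
  ∀ i : Fin q → ℕ, ¬ Function.Injective i → f i = 0

/-- Sum of the squares of the kernel `f` over `[N]^q`. -/
def sqSum (q N : ℕ) (f : (Fin q → ℕ) → ℝ) : ℝ :=
  ∑ i : Fin q → Fin N, (f (fun k => (i k : ℕ)))^2

/-- Convergence in distribution: the laws of `X n` converge weakly to `ν`. -/
def TendstoInDistrib {Ω E : Type*} [MeasurableSpace Ω] [MeasurableSpace E] [TopologicalSpace E]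
    (μ : Measure Ω) (X : ℕ → Ω → E) (ν : Measure E) : Prop :=
  ∀ φ : BoundedContinuousFunction E ℝ,
    Tendsto (fun n => ∫ ω, φ (X n ω) ∂μ) atTop (𝓝 (∫ x, φ x ∂ν))

/-- `P` has the law of `(Y - λ)/√λ`, where `Y` is Poisson with parameter `λ`. -/
def HasStdPoissonLaw {Ω : Type*} [MeasurableSpace Ω] (μ : Measure Ω) (lam : ℝ)
    (P : Ω → ℝ) : Prop :=
  Measure.map P μ =
    Measure.map (fun k : ℕ => ((k : ℝ) - lam) / Real.sqrt lam)
      (poissonMeasure lam.toNNReal)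

/-- The law of a Rademacher random variable. -/
def radLaw : Measure ℝ :=
  ((1 : ℝ≥0∞)/2) • Measure.dirac (1 : ℝ) + ((1 : ℝ≥0∞)/2) • Measure.dirac (-1 : ℝ)

/-- Concatenation of two tuples (padded with `0`). -/
def tcat {p m q : ℕ} (a : Fin p → ℕ) (b : Fin m → ℕ) : Fin q → ℕ := fun t =>
  if h : (t : ℕ) < p then a ⟨t, h⟩
  else if h2 : (t : ℕ) - p < m then b ⟨(t : ℕ) - p, h2⟩ else 0

/-- Concatenation of three tuples (padded with `0`). -/
def tcat3 {l m r q : ℕ} (a : Fin l → ℕ) (b : Fin m → ℕ) (c : Fin r → ℕ) : Fin q → ℕ := fun t =>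
  if h : (t : ℕ) < l then a ⟨t, h⟩
  else if h2 : (t : ℕ) - l < m then b ⟨(t : ℕ) - l, h2⟩
  else if h3 : (t : ℕ) - l - m < r then c ⟨(t : ℕ) - l - m, h3⟩ else 0

/-- The contraction quantity `B_p(N, f)`. -/
def Bcontr (q p N : ℕ) (f : (Fin q → ℕ) → ℝ) : ℝ :=
  ∑ k : Fin (q - p) → Fin N, ∑ k' : Fin (q - p) → Fin N,
    (∑ a : Fin p → Fin N,
      f (tcat (fun t => (a t : ℕ)) (fun t => (k t : ℕ))) *
      f (tcat (fun t => (a t : ℕ)) (fun t => (k' t : ℕ))))^2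

/-- The weighted contraction quantity `W_{r,l}(N, f, λ)`. -/
def Wcontr (q r l N : ℕ) (lam : ℕ → ℝ) (f : (Fin q → ℕ) → ℝ) : ℝ :=
  ∑ b : Fin (r - l) → Fin N, ∑ i : Fin (q - r) → Fin N, ∑ j : Fin (q - r) → Fin N,
    (∏ u, (lam (b u : ℕ))⁻¹) *
    (∑ a : Fin l → Fin N,
      f (tcat3 (fun t => (a t : ℕ)) (fun t => (b t : ℕ)) (fun t => (i t : ℕ))) *
      f (tcat3 (fun t => (a t : ℕ)) (fun t => (b t : ℕ)) (fun t => (j t : ℕ))))^2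

/-- A centered Gaussian measure on `ℝ^d` with covariance matrix `C`, characterized by
the fact that each linear functional is pushed forward to a one-dimensional Gaussian. -/
def IsCenteredGaussianVec {d : ℕ} (ν : Measure (Fin d → ℝ))
    (C : Matrix (Fin d) (Fin d) ℝ) : Prop :=
  IsProbabilityMeasure ν ∧ ∀ t : Fin d → ℝ,
    Measure.map (fun x => ∑ j, t j * x j) ν =
      gaussianReal 0 (∑ i, ∑ j, t i * C i j * t j).toNNReal

/-- A sequence of i.i.d. standard Gaussian random variables. -/
def IsStdGaussianSeq {Ω : Type*} [MeasurableSpace Ω] (μ : Measure Ω) (G : ℕ → Ω → ℝ) : Prop :=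
  (∀ i, Measurable (G i)) ∧ iIndepFun G μ ∧
    ∀ i, Measure.map (G i) μ = gaussianReal 0 1

/-- A Rademacher sequence: i.i.d. with `P(e i = 1) = P(e i = -1) = 1/2`. -/
def IsRademacherSeq {Ω : Type*} [MeasurableSpace Ω] (μ : Measure Ω) (e : ℕ → Ω → ℝ) : Prop :=
  (∀ i, Measurable (e i)) ∧ iIndepFun e μ ∧
    ∀ i, Measure.map (e i) μ = radLaw

/-- A sequence of independent centered random variables with unit variance. -/
def IsIndepCenteredUnitVar {Ω : Type*} [MeasurableSpace Ω] (μ : Measure Ω)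
    (X : ℕ → Ω → ℝ) : Prop :=
  (∀ i, Measurable (X i)) ∧ iIndepFun X μ ∧
    (∀ i, ∫ ω, X i ω ∂μ = 0) ∧ (∀ i, ∫ ω, (X i ω)^2 ∂μ = 1)

/-- A sequence of i.i.d. centered random variables with unit variance. -/
def IsIIDCenteredUnitVar {Ω : Type*} [MeasurableSpace Ω] (μ : Measure Ω)
    (X : ℕ → Ω → ℝ) : Prop :=
  IsIndepCenteredUnitVar μ X ∧ ∀ i j, Measure.map (X i) μ = Measure.map (X j) μ

/-- `sup_i E|X_i|^m < ∞`. -/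
def UnifMomentBound {Ω : Type*} [MeasurableSpace Ω] (μ : Measure Ω)
    (X : ℕ → Ω → ℝ) (m : ℝ) : Prop :=
  ∃ C : ℝ, ∀ i, ∫⁻ ω, ENNReal.ofReal (|X i ω| ^ m) ∂μ ≤ ENNReal.ofReal C

/-- A sequence of independent normalized Poisson random variables, `P i` having the law
of `(Y i - lam i)/√(lam i)` with `Y i` Poisson of parameter `lam i`. -/
def IsPoissonSeq {Ω : Type*} [MeasurableSpace Ω] (μ : Measure Ω) (lam : ℕ → ℝ)
    (P : ℕ → Ω → ℝ) : Prop :=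
  (∀ i, Measurable (P i)) ∧ iIndepFun P μ ∧
    ∀ i, HasStdPoissonLaw μ (lam i) (P i)


private lemma aux_sum_comp_le {X Y : Type*} [Fintype X] [Fintype Y] (φ : X → Y)
    (hφ : Function.Injective φ) (h : Y → ℝ) (hh : ∀ y, 0 ≤ h y) :
    ∑ x, h (φ x) ≤ ∑ y, h y := by
  classical
  rw [← Finset.sum_image (f := h) (g := φ) (fun x _ y _ hxy => hφ hxy)]
  exact Finset.sum_le_sum_of_subset_of_nonneg (Finset.subset_univ _) fun y _ _ => hh y

private lemma aux_sum_sq_le_sq_sum {ι : Type*} [Fintype ι] (x : ι → ℝ) (hx : ∀ i, 0 ≤ x i) :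
    ∑ i, (x i)^2 ≤ (∑ i, x i)^2 := by
  calc ∑ i, (x i)^2 ≤ ∑ i, x i * ∑ j, x j := by
        refine Finset.sum_le_sum fun i _ => ?_
        rw [sq]
        exact mul_le_mul_of_nonneg_left
          (Finset.single_le_sum (fun j _ => hx j) (Finset.mem_univ i)) (hx i)
    _ = (∑ i, x i)^2 := by rw [← Finset.sum_mul, sq]

private lemma aux_sum_split (N p m q : ℕ) (hpm : p + m = q) (g : (Fin q → ℕ) → ℝ) :
    ∑ a : Fin p → Fin N, ∑ k : Fin m → Fin N,
        g (tcat (fun t => (a t : ℕ)) (fun t => (k t : ℕ))) =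
      ∑ i : Fin q → Fin N, g (fun t => (i t : ℕ)) := by
  refine Eq.trans (Fintype.sum_prod_type (fun x : (Fin p → Fin N) × (Fin m → Fin N) =>
    g (tcat (fun t => (x.1 t : ℕ)) (fun t => (x.2 t : ℕ))))).symm ?_
  refine Fintype.sum_bijective
    (fun x : (Fin p → Fin N) × (Fin m → Fin N) =>
      fun t : Fin q => if h : (t : ℕ) < p then x.1 ⟨t, h⟩
        else x.2 ⟨(t : ℕ) - p, by have := t.isLt; omega⟩) ?_ _ _ ?_
  · apply Function.bijective_iff_has_inverse.2
    refine ⟨fun i => (fun s => i ⟨s, by have := s.isLt; omega⟩,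
        fun s => i ⟨p + s, by have := s.isLt; omega⟩), ?_, ?_⟩
    · intro x
      refine Prod.ext ?_ ?_ <;> funext s <;> dsimp
      · rw [dif_pos s.isLt]
      · rw [dif_neg (by omega)]
        congr 1
        exact Fin.ext (by simp)
    · intro i
      funext t
      dsimp
      split_ifs with h
      · rfl
      · congr 1
        exact Fin.ext (by simp; omega)
  · rintro ⟨a, k⟩
    dsimp
    congr 1
    funext t
    unfold tcat
    dsimp
    split_ifs with h1 h2
    · rfl
    · rfl
    · exact absurd (by have := t.isLt; omega) h2

private lemma aux_sum_pow4_le_B (q N : ℕ) (f : (Fin q → ℕ) → ℝ) :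
    ∑ a : Fin 1 → Fin N, ∑ k : Fin (q - 1) → Fin N,
      (f (tcat (fun t => (a t : ℕ)) (fun t => (k t : ℕ))))^4 ≤ Bcontr q 1 N f := by
  rw [Finset.sum_comm]
  unfold Bcontr
  refine Finset.sum_le_sum fun k _ => ?_
  calc ∑ a : Fin 1 → Fin N, (f (tcat (fun t => (a t : ℕ)) (fun t => (k t : ℕ))))^4
      ≤ (∑ a : Fin 1 → Fin N, (f (tcat (fun t => (a t : ℕ)) (fun t => (k t : ℕ))))^2)^2 := by
        have h0 := aux_sum_sq_le_sq_sum
          (fun a : Fin 1 → Fin N => (f (tcat (fun t => (a t : ℕ)) (fun t => (k t : ℕ))))^2)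
          (fun a => sq_nonneg _)
        calc ∑ a : Fin 1 → Fin N, (f (tcat (fun t => (a t : ℕ)) (fun t => (k t : ℕ))))^4
            = ∑ a : Fin 1 → Fin N,
              ((f (tcat (fun t => (a t : ℕ)) (fun t => (k t : ℕ))))^2)^2 := by
              refine Finset.sum_congr rfl fun a _ => by ring
          _ ≤ _ := h0
    _ = (∑ a : Fin 1 → Fin N,
          f (tcat (fun t => (a t : ℕ)) (fun t => (k t : ℕ))) *
          f (tcat (fun t => (a t : ℕ)) (fun t => (k t : ℕ))))^2 := by
        congr 1
        exact Finset.sum_congr rfl fun a _ => (sq _)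
    _ ≤ ∑ k' : Fin (q - 1) → Fin N,
          (∑ a : Fin 1 → Fin N,
            f (tcat (fun t => (a t : ℕ)) (fun t => (k t : ℕ))) *
            f (tcat (fun t => (a t : ℕ)) (fun t => (k' t : ℕ))))^2 :=
        Finset.single_le_sum (f := fun k' : Fin (q - 1) → Fin N =>
          (∑ a : Fin 1 → Fin N,
            f (tcat (fun t => (a t : ℕ)) (fun t => (k t : ℕ))) *
            f (tcat (fun t => (a t : ℕ)) (fun t => (k' t : ℕ))))^2)
          (fun k' _ => sq_nonneg _) (Finset.mem_univ k)

private lemma aux_sum3_le_sum2 {B I Y : Type*} [Fintype B] [Fintype I] [Fintype Y]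
    (c : B → I → Y)
    (hc : Function.Injective (fun x : B × I × I => (c x.1 x.2.1, c x.1 x.2.2)))
    (h : Y → Y → ℝ) (hh : ∀ y y', 0 ≤ h y y') :
    ∑ b, ∑ i, ∑ j, h (c b i) (c b j) ≤ ∑ y, ∑ y', h y y' := by
  have e1 : (∑ x : B × I × I, h (c x.1 x.2.1) (c x.1 x.2.2))
      = ∑ b, ∑ i, ∑ j, h (c b i) (c b j) := by
    rw [Fintype.sum_prod_type]
    exact Finset.sum_congr rfl fun b _ => Fintype.sum_prod_type _
  have e2 : (∑ y : Y × Y, h y.1 y.2) = ∑ y, ∑ y', h y y' := Fintype.sum_prod_type _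
  rw [← e1, ← e2]
  exact aux_sum_comp_le _ hc (fun y : Y × Y => h y.1 y.2) (fun y => hh _ _)

private def catc (rl qr ql N : ℕ) (hq : rl + qr = ql)
    (b : Fin rl → Fin N) (i : Fin qr → Fin N) : Fin ql → Fin N := fun t =>
  if h : (t : ℕ) < rl then b ⟨t, h⟩
  else i ⟨(t : ℕ) - rl, by have := t.isLt; omega⟩

private lemma catc_inj (rl qr ql N : ℕ) (hq : rl + qr = ql)
    (b b' : Fin rl → Fin N) (i i' : Fin qr → Fin N)
    (h : catc rl qr ql N hq b i = catc rl qr ql N hq b' i') : b = b' ∧ i = i' := by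
  constructor
  · funext u
    have hu : (u : ℕ) < ql := by have := u.isLt; omega
    have h1 := congrFun h ⟨u, hu⟩
    simp only [catc] at h1
    rw [dif_pos u.isLt, dif_pos u.isLt] at h1
    exact h1
  · funext s
    have hs : rl + (s : ℕ) < ql := by have := s.isLt; omega
    have h1 := congrFun h ⟨rl + s, hs⟩
    simp only [catc, dif_neg (show ¬ rl + (s : ℕ) < rl by omega)] at h1
    have e : ∀ (g : Fin qr → Fin N) (pf : rl + (s : ℕ) - rl < qr),
        g ⟨rl + (s : ℕ) - rl, pf⟩ = g s := fun g pf => congrArg g (Fin.ext (by simp))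
    exact (e i _).symm.trans (h1.trans (e i' _))

private lemma aux_triple_le_B (q r l N : ℕ) (hlr : l ≤ r) (hr : r ≤ q)
    (f : (Fin q → ℕ) → ℝ) :
    ∑ b : Fin (r - l) → Fin N, ∑ i : Fin (q - r) → Fin N, ∑ j : Fin (q - r) → Fin N,
      (∑ a : Fin l → Fin N,
        f (tcat3 (fun t => (a t : ℕ)) (fun t => (b t : ℕ)) (fun t => (i t : ℕ))) *
        f (tcat3 (fun t => (a t : ℕ)) (fun t => (b t : ℕ)) (fun t => (j t : ℕ))))^2
      ≤ Bcontr q l N f := by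
  have hq : (r - l) + (q - r) = q - l := by omega
  have hkey : ∀ (aa : Fin l → Fin N) (b : Fin (r - l) → Fin N) (i : Fin (q - r) → Fin N),
      tcat3 (q := q) (fun t => (aa t : ℕ)) (fun t => (b t : ℕ)) (fun t => (i t : ℕ))
        = tcat (q := q) (fun t => (aa t : ℕ))
            (fun t => ((catc (r-l) (q-r) (q-l) N hq b i) t : ℕ)) := by
    intro aa b i
    funext t
    have ht := t.isLt
    simp only [tcat3, tcat, catc]
    split_ifs with h1 h2 h3 h4 h5 <;> first | rfl | omega
  simp only [hkey]
  unfold Bcontr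
  refine aux_sum3_le_sum2 (catc (r-l) (q-r) (q-l) N hq) ?_
    (fun k k' => (∑ a : Fin l → Fin N,
      f (tcat (fun t => (a t : ℕ)) (fun t => (k t : ℕ))) *
      f (tcat (fun t => (a t : ℕ)) (fun t => (k' t : ℕ))))^2)
    (fun _ _ => sq_nonneg _)
  intro x x' hx
  obtain ⟨hb1, hi⟩ := catc_inj _ _ _ _ hq _ _ _ _ (congrArg Prod.fst hx)
  obtain ⟨hb2, hj⟩ := catc_inj _ _ _ _ hq _ _ _ _ (congrArg Prod.snd hx)
  exact Prod.ext hb1 (Prod.ext hi hj)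

/-- Key technical proposition: if all the contraction quantities `B_p` vanish
asymptotically, then so do the `L⁴` norm of the kernels and all the weighted star
contractions `W_{r,l}`. -/
theorem contractions_vanish
    (q : ℕ) (hq : 2 ≤ q)
    (lam : ℕ → ℝ) (α : ℝ) (hα : 0 < α) (hlam : ∀ i, α ≤ lam i)
    (N : ℕ → ℕ) (hN : Tendsto N atTop atTop)
    (f : ℕ → (Fin q → ℕ) → ℝ)
    (hsymm : ∀ n, SymmKernel q (f n)) (hdiag : ∀ n, VanishOnDiag q (f n))
    (hB : ∀ p, 1 ≤ p → p ≤ q - 1 → Tendsto (fun n => Bcontr q p (N n) (f n)) atTop (𝓝 0)) :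
    Tendsto (fun n => ∑ i : Fin q → Fin (N n),
        (f n (fun k => (i k : ℕ)))^4 * ∏ l, (lam (i l : ℕ))⁻¹) atTop (𝓝 0) ∧
    ∀ r, 1 ≤ r → r ≤ q → ∀ l, 1 ≤ l → l ≤ min r (q - 1) →
      Tendsto (fun n => Wcontr q r l (N n) lam (f n)) atTop (𝓝 0) := by
  have hlam0 : ∀ i, (0:ℝ) ≤ lam i := fun i => le_trans hα.le (hlam i)
  constructor
  · -- part (a)
    have hB1 := hB 1 le_rfl (by omega)
    refine squeeze_zero (g := fun n => α⁻¹ ^ q * Bcontr q 1 (N n) (f n)) ?_ ?_ ?_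
    · intro n
      refine Finset.sum_nonneg fun i _ => mul_nonneg (by positivity)
        (Finset.prod_nonneg fun u _ => inv_nonneg.2 (hlam0 _))
    · intro n
      have prodbound : ∀ i : Fin q → Fin (N n),
          (∏ u, (lam (i u : ℕ))⁻¹) ≤ α⁻¹ ^ q := by
        intro i
        calc ∏ u, (lam (i u : ℕ))⁻¹ ≤ ∏ _u : Fin q, α⁻¹ :=
              Finset.prod_le_prod (fun u _ => inv_nonneg.2 (hlam0 _))
                (fun u _ => inv_anti₀ hα (hlam _))
          _ = α⁻¹ ^ q := by simp
      have f4B : (∑ i : Fin q → Fin (N n), (f n (fun k => (i k : ℕ)))^4)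
          ≤ Bcontr q 1 (N n) (f n) := by
        have h1 := aux_sum_pow4_le_B q (N n) (f n)
        have h2 : (∑ a : Fin 1 → Fin (N n), ∑ k : Fin (q-1) → Fin (N n),
            (f n (tcat (fun t => (a t : ℕ)) (fun t => (k t : ℕ))))^4)
            = ∑ i : Fin q → Fin (N n), (f n (fun k => (i k : ℕ)))^4 :=
          aux_sum_split (N n) 1 (q-1) q (by omega) (fun v => (f n v)^4)
        exact h2.symm.trans_le h1
      calc ∑ i : Fin q → Fin (N n), (f n (fun k => (i k : ℕ)))^4 * ∏ u, (lam (i u : ℕ))⁻¹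
          ≤ ∑ i : Fin q → Fin (N n), (f n (fun k => (i k : ℕ)))^4 * α⁻¹ ^ q :=
            Finset.sum_le_sum fun i _ =>
              mul_le_mul_of_nonneg_left (prodbound i) (by positivity)
        _ = α⁻¹ ^ q * ∑ i : Fin q → Fin (N n), (f n (fun k => (i k : ℕ)))^4 := by
            rw [← Finset.sum_mul, mul_comm]
        _ ≤ α⁻¹ ^ q * Bcontr q 1 (N n) (f n) :=
            mul_le_mul_of_nonneg_left f4B (by positivity)
    · simpa using hB1.const_mul (α⁻¹ ^ q)
  · -- part (b)
    intro r hr1 hrq l hl1 hlmin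
    have hlr : l ≤ r := le_trans hlmin (min_le_left _ _)
    have hlq1 : l ≤ q - 1 := le_trans hlmin (min_le_right _ _)
    have hBl := hB l hl1 hlq1
    refine squeeze_zero (g := fun n => α⁻¹ ^ (r - l) * Bcontr q l (N n) (f n)) ?_ ?_ ?_
    · intro n
      unfold Wcontr
      refine Finset.sum_nonneg fun b _ => Finset.sum_nonneg fun i _ =>
        Finset.sum_nonneg fun j _ => mul_nonneg
          (Finset.prod_nonneg fun u _ => inv_nonneg.2 (hlam0 _)) (sq_nonneg _)
    · intro n
      have prodbound : ∀ b : Fin (r - l) → Fin (N n),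
          (∏ u, (lam (b u : ℕ))⁻¹) ≤ α⁻¹ ^ (r - l) := by
        intro b
        calc ∏ u, (lam (b u : ℕ))⁻¹ ≤ ∏ _u : Fin (r - l), α⁻¹ :=
              Finset.prod_le_prod (fun u _ => inv_nonneg.2 (hlam0 _))
                (fun u _ => inv_anti₀ hα (hlam _))
          _ = α⁻¹ ^ (r - l) := by simp
      unfold Wcontr
      calc ∑ b : Fin (r - l) → Fin (N n), ∑ i : Fin (q - r) → Fin (N n),
            ∑ j : Fin (q - r) → Fin (N n),
            (∏ u, (lam (b u : ℕ))⁻¹) *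
            (∑ a : Fin l → Fin (N n),
              f n (tcat3 (fun t => (a t : ℕ)) (fun t => (b t : ℕ)) (fun t => (i t : ℕ))) *
              f n (tcat3 (fun t => (a t : ℕ)) (fun t => (b t : ℕ)) (fun t => (j t : ℕ))))^2
          ≤ ∑ b : Fin (r - l) → Fin (N n), ∑ i : Fin (q - r) → Fin (N n),
            ∑ j : Fin (q - r) → Fin (N n),
            α⁻¹ ^ (r - l) *
            (∑ a : Fin l → Fin (N n),
              f n (tcat3 (fun t => (a t : ℕ)) (fun t => (b t : ℕ)) (fun t => (i t : ℕ))) *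
              f n (tcat3 (fun t => (a t : ℕ)) (fun t => (b t : ℕ)) (fun t => (j t : ℕ))))^2 :=
            Finset.sum_le_sum fun b _ => Finset.sum_le_sum fun i _ =>
              Finset.sum_le_sum fun j _ =>
                mul_le_mul_of_nonneg_right (prodbound b) (sq_nonneg _)
        _ = α⁻¹ ^ (r - l) * ∑ b : Fin (r - l) → Fin (N n), ∑ i : Fin (q - r) → Fin (N n),
            ∑ j : Fin (q - r) → Fin (N n),
            (∑ a : Fin l → Fin (N n),
              f n (tcat3 (fun t => (a t : ℕ)) (fun t => (b t : ℕ)) (fun t => (i t : ℕ))) *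
              f n (tcat3 (fun t => (a t : ℕ)) (fun t => (b t : ℕ)) (fun t => (j t : ℕ))))^2 := by
            simp_rw [← Finset.mul_sum]
        _ ≤ α⁻¹ ^ (r - l) * Bcontr q l (N n) (f n) :=
            mul_le_mul_of_nonneg_left (aux_triple_le_B q r l (N n) hlr hrq (f n))
              (by positivity)
    · simpa using hBl.const_mul (α⁻¹ ^ (r - l))


end
end

section
/- For every α > 0 and every real q ≥ 1, the function λ ↦ E[|Y_λ − λ|^q]/λ^{q/2} is bounded on [α, ∞), where Y_λ is a Poisson random variable with parameter λ; that is, there exists M < ∞ such that Σ_{n=0}^{∞} e^{−λ} λ^n/n! · |n − λ|^q ≤ M·λ^{q/2} for all λ ≥ α. -/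
open MeasureTheory ProbabilityTheory Filter Finset Topology
open scoped ENNReal NNReal

noncomputable section

lemma my_tsum_exp (x : ℝ) : ∑' n : ℕ, x ^ n / (n.factorial : ℝ) = Real.exp x := by
  rw [Real.exp_eq_exp_ℝ, NormedSpace.exp_eq_tsum_div]

-- exp inequalities
lemma my_exp_ineq1 (t : ℝ) (ht : 0 ≤ t) : Real.exp t - 1 - t ≤ t ^ 2 * Real.exp t := by
  have h1 : 1 - t ≤ Real.exp (-t) := by
    have := Real.add_one_le_exp (-t); linarith
  have h2 : Real.exp t - 1 ≤ t * Real.exp t := by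
    have := mul_le_mul_of_nonneg_left h1 (Real.exp_pos t).le
    rw [mul_sub, ← Real.exp_add] at this
    simp at this; nlinarith [Real.exp_pos t]
  nlinarith [Real.exp_pos t, Real.add_one_le_exp t]

lemma my_exp_ineq2 (t : ℝ) (ht : 0 ≤ t) : Real.exp (-t) - 1 + t ≤ t ^ 2 * Real.exp t := by
  have h1 : 1 - t ≤ Real.exp (-t) := by
    have := Real.add_one_le_exp (-t); linarith
  have h3 : Real.exp (-t) * (1 + t) ≤ 1 := by
    have := Real.add_one_le_exp t
    have := mul_le_mul_of_nonneg_left this (Real.exp_pos (-t)).le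
    rw [← Real.exp_add, neg_add_cancel, Real.exp_zero] at this
    nlinarith [Real.exp_pos (-t)]
  have h4 : 1 ≤ Real.exp t := Real.one_le_exp ht
  nlinarith [Real.exp_pos (-t)]

lemma my_pow_le (y : ℝ) (m : ℕ) : y ^ (2*m) ≤ ((2*m).factorial : ℝ) * (Real.exp y + Real.exp (-y)) := by
  have h1 : |y| ^ (2*m) / ((2*m).factorial : ℝ) ≤ Real.exp |y| := by
    calc |y| ^ (2*m) / ((2*m).factorial : ℝ)
        ≤ ∑ i ∈ Finset.range (2*m+1), |y| ^ i / (i.factorial : ℝ) := by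
          exact Finset.single_le_sum (f := fun i => |y| ^ i / (i.factorial : ℝ))
            (fun i _ => by positivity) (Finset.self_mem_range_succ (2*m))
      _ ≤ Real.exp |y| := Real.sum_le_exp_of_nonneg (abs_nonneg y) _
  have h2 : Real.exp |y| ≤ Real.exp y + Real.exp (-y) := by
    rcases abs_cases y with ⟨h, _⟩ | ⟨h, _⟩
    · rw [h]; linarith [Real.exp_pos (-y)]
    · rw [h]; linarith [Real.exp_pos y]
  have hy : y ^ (2*m) = |y| ^ (2*m) := by
    rw [← abs_pow, abs_of_nonneg (even_two_mul m |>.pow_nonneg y)]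
  have hf : (0:ℝ) < ((2*m).factorial : ℝ) := by positivity
  rw [hy]
  calc |y| ^ (2*m) = ((2*m).factorial : ℝ) * (|y| ^ (2*m) / ((2*m).factorial : ℝ)) := by field_simp
    _ ≤ ((2*m).factorial : ℝ) * (Real.exp y + Real.exp (-y)) := by
        apply mul_le_mul_of_nonneg_left (le_trans h1 h2) hf.le



lemma my_poisson_exp (lam c : ℝ) :
    Summable (fun n : ℕ => Real.exp (-lam) * lam ^ n / (n.factorial : ℝ) * Real.exp (c * ((n:ℝ) - lam))) ∧
    ∑' n : ℕ, Real.exp (-lam) * lam ^ n / (n.factorial : ℝ) * Real.exp (c * ((n:ℝ) - lam))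
      = Real.exp (lam * (Real.exp c - 1 - c)) := by
  have hterm : ∀ n : ℕ, Real.exp (-lam) * lam ^ n / (n.factorial : ℝ) * Real.exp (c * ((n:ℝ) - lam))
      = Real.exp (-lam - c*lam) * ((lam * Real.exp c) ^ n / (n.factorial : ℝ)) := by
    intro n
    rw [mul_pow, ← Real.exp_nat_mul]
    rw [show c * ((n:ℝ) - lam) = (n:ℝ)*c + (-(c*lam)) by ring, Real.exp_add,
        show -lam - c*lam = -lam + (-(c*lam)) by ring, Real.exp_add]
    ring
  constructor
  · simp only [hterm]
    exact (Real.summable_pow_div_factorial _).mul_left _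
  · simp only [hterm]
    rw [tsum_mul_left, my_tsum_exp, ← Real.exp_add]
    congr 1; ring

lemma my_poisson_one (lam : ℝ) :
    Summable (fun n : ℕ => Real.exp (-lam) * lam ^ n / (n.factorial : ℝ)) ∧
    ∑' n : ℕ, Real.exp (-lam) * lam ^ n / (n.factorial : ℝ) = 1 := by
  have hterm : ∀ n : ℕ, Real.exp (-lam) * lam ^ n / (n.factorial : ℝ)
      = Real.exp (-lam) * (lam ^ n / (n.factorial : ℝ)) := fun n => by ring
  constructor
  · simp only [hterm]
    exact (Real.summable_pow_div_factorial _).mul_left _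
  · simp only [hterm]
    rw [tsum_mul_left, my_tsum_exp, ← Real.exp_add, neg_add_cancel, Real.exp_zero]

/-- For every `α > 0` and real `q ≥ 1`, the normalized absolute centered Poisson moment
`λ ↦ E|Y_λ - λ|^q / λ^{q/2}` is bounded on `[α, ∞)`. -/
theorem poisson_abs_moment_bounded (α : ℝ) (hα : 0 < α) (q : ℝ) (hq : 1 ≤ q) :
    ∃ M : ℝ, ∀ lam : ℝ, α ≤ lam →
      (∑' n : ℕ, Real.exp (-lam) * lam ^ n / (n.factorial : ℝ) * |(n : ℝ) - lam| ^ q)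
        ≤ M * lam ^ (q / 2) := by
  obtain ⟨m, hqm⟩ := exists_nat_ge q
  set E : ℝ := Real.exp (Real.exp (Real.sqrt α)⁻¹) with hE
  refine ⟨((2*m).factorial : ℝ) * (E + E) + 1, ?_⟩
  intro lam hlam
  have hlam0 : 0 < lam := lt_of_lt_of_le hα hlam
  set p : ℕ → ℝ := fun n => Real.exp (-lam) * lam ^ n / (n.factorial : ℝ) with hp
  have hp0 : ∀ n, 0 ≤ p n := fun n => by
    rw [hp]; positivity
  set s : ℝ := Real.sqrt lam with hs
  have hs0 : 0 < s := Real.sqrt_pos.mpr hlam0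
  set θ : ℝ := s⁻¹ with hθ
  have hθ0 : 0 < θ := inv_pos.mpr hs0
  have hθα : θ ≤ (Real.sqrt α)⁻¹ := by
    rw [hθ, hs]
    exact inv_anti₀ (Real.sqrt_pos.mpr hα) (Real.sqrt_le_sqrt hlam)
  have hθ2 : lam * θ^2 = 1 := by
    rw [hθ, hs, inv_pow, Real.sq_sqrt hlam0.le]
    field_simp
  have hexpθ : Real.exp θ ≤ Real.exp (Real.sqrt α)⁻¹ := Real.exp_le_exp.mpr hθα
  have e1 : Real.exp (lam * (Real.exp θ - 1 - θ)) ≤ E := by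
    rw [hE]
    apply Real.exp_le_exp.mpr
    calc lam * (Real.exp θ - 1 - θ) ≤ lam * (θ^2 * Real.exp θ) :=
          mul_le_mul_of_nonneg_left (my_exp_ineq1 θ hθ0.le) hlam0.le
      _ = Real.exp θ := by rw [← mul_assoc, hθ2, one_mul]
      _ ≤ _ := hexpθ
  have e2 : Real.exp (lam * (Real.exp (-θ) - 1 - (-θ))) ≤ E := by
    rw [hE]
    apply Real.exp_le_exp.mpr
    calc lam * (Real.exp (-θ) - 1 - (-θ)) = lam * (Real.exp (-θ) - 1 + θ) := by ring
      _ ≤ lam * (θ^2 * Real.exp θ) :=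
          mul_le_mul_of_nonneg_left (my_exp_ineq2 θ hθ0.le) hlam0.le
      _ = Real.exp θ := by rw [← mul_assoc, hθ2, one_mul]
      _ ≤ _ := hexpθ
  -- notation
  set y : ℕ → ℝ := fun n => θ * ((n:ℝ) - lam) with hy
  set g : ℕ → ℝ := fun n => p n * (y n) ^ (2*m) + p n with hg
  -- summability of the exponential tilts
  have hSp : Summable (fun n : ℕ => p n * Real.exp (θ * ((n:ℝ) - lam))) := (my_poisson_exp lam θ).1
  have hSm : Summable (fun n : ℕ => p n * Real.exp ((-θ) * ((n:ℝ) - lam))) := (my_poisson_exp lam (-θ)).1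
  have hS1 : Summable p := (my_poisson_one lam).1
  -- bound on the even moment terms
  have hb : ∀ n : ℕ, p n * (y n) ^ (2*m) ≤
      ((2*m).factorial : ℝ) * (p n * Real.exp (θ * ((n:ℝ) - lam)) + p n * Real.exp ((-θ) * ((n:ℝ) - lam))) := by
    intro n
    have h := mul_le_mul_of_nonneg_left (my_pow_le (y n) m) (hp0 n)
    have hneg : Real.exp ((-θ) * ((n:ℝ) - lam)) = Real.exp (-(y n)) := by
      rw [hy]; ring_nf
    rw [hneg]
    nlinarith [h]
  have hynn : ∀ n, 0 ≤ (y n) ^ (2*m) := fun n => (even_two_mul m).pow_nonneg _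
  have hFsum : Summable (fun n : ℕ => ((2*m).factorial : ℝ) *
      (p n * Real.exp (θ * ((n:ℝ) - lam)) + p n * Real.exp ((-θ) * ((n:ℝ) - lam)))) :=
    ((hSp.add hSm).mul_left _)
  have hg1sum : Summable (fun n : ℕ => p n * (y n) ^ (2*m)) :=
    Summable.of_nonneg_of_le (fun n => mul_nonneg (hp0 n) (hynn n)) hb hFsum
  have hgsum : Summable g := by
    rw [hg]; exact hg1sum.add hS1
  -- bound on tsum g
  have htsumg : ∑' n, g n ≤ ((2*m).factorial : ℝ) * (E + E) + 1 := by
    have h1 : ∑' n, g n = (∑' n, p n * (y n) ^ (2*m)) + ∑' n, p n := by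
      rw [hg]; exact Summable.tsum_add hg1sum hS1
    have h2 : ∑' n, p n * (y n) ^ (2*m) ≤ ((2*m).factorial : ℝ) * (E + E) := by
      calc ∑' n, p n * (y n) ^ (2*m)
          ≤ ∑' n, ((2*m).factorial : ℝ) *
            (p n * Real.exp (θ * ((n:ℝ) - lam)) + p n * Real.exp ((-θ) * ((n:ℝ) - lam))) :=
            Summable.tsum_le_tsum hb hg1sum hFsum
        _ = ((2*m).factorial : ℝ) *
            ((∑' n, p n * Real.exp (θ * ((n:ℝ) - lam))) + ∑' n, p n * Real.exp ((-θ) * ((n:ℝ) - lam))) := by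
            rw [tsum_mul_left, Summable.tsum_add hSp hSm]
        _ ≤ ((2*m).factorial : ℝ) * (E + E) := by
            apply mul_le_mul_of_nonneg_left _ (by positivity)
            rw [(my_poisson_exp lam θ).2, (my_poisson_exp lam (-θ)).2]
            exact add_le_add e1 e2
    rw [h1, (my_poisson_one lam).2]
    linarith
  -- pointwise bound
  have hpt : ∀ n : ℕ, p n * |(n:ℝ) - lam| ^ q ≤ lam ^ (q/2) * g n := by
    intro n
    set t : ℝ := |(n:ℝ) - lam| / s with ht
    have ht0 : 0 ≤ t := by
      rw [ht]; positivity
    have hq2m : q ≤ ((2*m : ℕ) : ℝ) := by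
      push_cast
      have : (1:ℝ) ≤ m := le_trans hq hqm
      linarith
    have htq : t ^ q ≤ t ^ (2*m) + 1 := by
      rcases le_or_gt t 1 with h | h
      · have h1 : t ^ q ≤ 1 := Real.rpow_le_one ht0 h (by linarith)
        have h2 : (0:ℝ) ≤ t ^ (2*m) := pow_nonneg ht0 _
        linarith
      · have h1 : t ^ q ≤ t ^ (((2*m : ℕ)) : ℝ) :=
          Real.rpow_le_rpow_of_exponent_le h.le hq2m
        rw [Real.rpow_natCast] at h1
        linarith
    have htabs : t = |y n| := by
      rw [ht, hy, hθ, abs_mul, abs_sub_comm]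
      rw [abs_of_pos (inv_pos.mpr hs0)]
      rw [abs_sub_comm]
      ring
    have ht2m : t ^ (2*m) = (y n) ^ (2*m) := by
      rw [htabs, (even_two_mul m).pow_abs]
    have hst : |(n:ℝ) - lam| = s * t := by
      rw [ht]; field_simp
    have hsq : s ^ q = lam ^ (q/2) := by
      rw [hs, Real.sqrt_eq_rpow, ← Real.rpow_mul hlam0.le]
      congr 1; ring
    calc p n * |(n:ℝ) - lam| ^ q = p n * (lam ^ (q/2) * t ^ q) := by
          rw [hst, Real.mul_rpow hs0.le ht0, hsq]
      _ ≤ p n * (lam ^ (q/2) * (t ^ (2*m) + 1)) := by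
          apply mul_le_mul_of_nonneg_left _ (hp0 n)
          exact mul_le_mul_of_nonneg_left htq (Real.rpow_nonneg hlam0.le _)
      _ = lam ^ (q/2) * g n := by
          rw [hg, ht2m]; ring
  have hLsum : Summable (fun n : ℕ => p n * |(n:ℝ) - lam| ^ q) :=
    Summable.of_nonneg_of_le
      (fun n => mul_nonneg (hp0 n) (Real.rpow_nonneg (abs_nonneg _) _))
      hpt (hgsum.mul_left _)
  calc ∑' n : ℕ, p n * |(n:ℝ) - lam| ^ q
      ≤ ∑' n : ℕ, lam ^ (q/2) * g n := Summable.tsum_le_tsum hpt hLsum (hgsum.mul_left _)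
    _ = lam ^ (q/2) * ∑' n, g n := tsum_mul_left
    _ ≤ lam ^ (q/2) * (((2*m).factorial : ℝ) * (E + E) + 1) :=
        mul_le_mul_of_nonneg_left htsumg (Real.rpow_nonneg hlam0.le _)
    _ = (((2*m).factorial : ℝ) * (E + E) + 1) * lam ^ (q/2) := mul_comm _ _

end
end
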